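/- arXiv:0808.3581 — 6 statements merged into one kernel-verified Lean document; each statement's English description precedes it below -/
import Mathlib

section
/- The commutator of the effective single-excitation Hamiltonian E with the position operator X satisfies i(E∘X − X∘E) = P, as linear maps on the space of finitely supported complex sequences. -/
open Complex Finsupp

/-- The position operator `X` on the space of finitely supported complex sequences:
`X δ_l = (l+1) δ_l`. -/
noncomputable def Xop : (ℕ →₀ ℂ) →ₗ[ℂ] (ℕ →₀ ℂ) :=
  Finsupp.linearCombination ℂ fun l : ℕ => ((l : ℂ) + 1) • Finsupp.single l 1

/-- The effective single-excitation Hamiltonian `E`: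
`E δ_l = i (l+1) δ_{l+1} - i l δ_{l-1}` (the second term vanishing for `l = 0`). -/
noncomputable def Eop : (ℕ →₀ ℂ) →ₗ[ℂ] (ℕ →₀ ℂ) :=
  Finsupp.linearCombination ℂ fun l : ℕ =>
    (Complex.I * ((l : ℂ) + 1)) • Finsupp.single (l + 1) 1
      - (Complex.I * (l : ℂ)) • Finsupp.single (l - 1) 1

/-- The momentum-type operator `P`:
`P δ_l = (l+1) δ_{l+1} + l δ_{l-1}` (the second term vanishing for `l = 0`). -/
noncomputable def Pop : (ℕ →₀ ℂ) →ₗ[ℂ] (ℕ →₀ ℂ) :=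
  Finsupp.linearCombination ℂ fun l : ℕ =>
    ((l : ℂ) + 1) • Finsupp.single (l + 1) 1 + (l : ℂ) • Finsupp.single (l - 1) 1

lemma Xop_single (l : ℕ) (c : ℂ) :
    Xop (Finsupp.single l c) = Finsupp.single l (((l : ℂ) + 1) * c) := by
  simp only [Xop, Finsupp.linearCombination_single, smul_smul, Finsupp.smul_single,
    smul_eq_mul, mul_one]
  ring_nf

lemma Eop_single (l : ℕ) (c : ℂ) :
    Eop (Finsupp.single l c) = Finsupp.single (l + 1) (Complex.I * ((l : ℂ) + 1) * c)
      - Finsupp.single (l - 1) (Complex.I * (l : ℂ) * c) := by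
  simp only [Eop, Finsupp.linearCombination_single, smul_sub, smul_smul, Finsupp.smul_single,
    smul_eq_mul, mul_one]
  ring_nf

lemma Pop_single (l : ℕ) (c : ℂ) :
    Pop (Finsupp.single l c) = Finsupp.single (l + 1) (((l : ℂ) + 1) * c)
      + Finsupp.single (l - 1) ((l : ℂ) * c) := by
  simp only [Pop, Finsupp.linearCombination_single, smul_add, smul_smul, Finsupp.smul_single,
    smul_eq_mul, mul_one]
  ring_nf

/-- `i [E, X] = P` as linear maps on finitely supported complex sequences. -/
theorem commutator_E_X : Complex.I • (Eop ∘ₗ Xop - Xop ∘ₗ Eop) = Pop := by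
  refine Finsupp.lhom_ext fun l c => ?_
  simp only [LinearMap.smul_apply, LinearMap.sub_apply, LinearMap.comp_apply,
    Xop_single, Eop_single, Pop_single, map_sub, smul_sub, Finsupp.smul_single,
    smul_eq_mul]
  cases l with
  | zero =>
    ext k
    simp only [Finsupp.coe_add, Finsupp.coe_sub, Pi.add_apply, Pi.sub_apply,
      Finsupp.single_apply, Nat.cast_zero, Nat.zero_sub, Nat.cast_ofNat, Nat.cast_one]
    split_ifs <;> first
      | omega
      | (subst_vars; push_cast; ring_nf; all_goals simp [Complex.I_sq])
  | succ n =>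
    ext k
    simp only [Finsupp.coe_add, Finsupp.coe_sub, Pi.add_apply, Pi.sub_apply,
      Finsupp.single_apply, Nat.add_sub_cancel, Nat.succ_sub_one, Nat.cast_add, Nat.cast_one]
    split_ifs <;> first
      | omega
      | (subst_vars; push_cast; ring_nf; all_goals simp [Complex.I_sq])
end

section
/- Let ad : End(V) → End(V) be the map ad(A) = i(E∘A − A∘E). Then for every integer k ≥ 1 the iterated commutators of X with iE close in the algebra spanned by {X, P, id}: ad^{2k−1}(X) = 4^{k−1}·P and ad^{2k}(X) = 4^{k−1}·(4X − 2·id). -/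
open Complex Finsupp

/-- The generator of Heisenberg-picture time evolution: `ad A = i (E ∘ A - A ∘ E)`. -/
noncomputable def adE :
    ((ℕ →₀ ℂ) →ₗ[ℂ] (ℕ →₀ ℂ)) → ((ℕ →₀ ℂ) →ₗ[ℂ] (ℕ →₀ ℂ)) :=
  fun A => Complex.I • (Eop ∘ₗ A - A ∘ₗ Eop)

lemma Xs (l : ℕ) : Xop (Finsupp.single l 1) = ((l:ℂ)+1) • Finsupp.single l 1 := by
  simp [Xop, Finsupp.linearCombination_single]

lemma Es (l : ℕ) : Eop (Finsupp.single l 1) =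
    (Complex.I*((l:ℂ)+1)) • Finsupp.single (l+1) 1 - (Complex.I*(l:ℂ)) • Finsupp.single (l-1) 1 := by
  simp [Eop, Finsupp.linearCombination_single]

lemma Ps (l : ℕ) : Pop (Finsupp.single l 1) =
    ((l:ℂ)+1) • Finsupp.single (l+1) 1 + (l:ℂ) • Finsupp.single (l-1) 1 := by
  simp [Pop, Finsupp.linearCombination_single]

lemma single_eq (l : ℕ) (c : ℂ) : Finsupp.single l c = c • Finsupp.single l 1 := by
  rw [Finsupp.smul_single, smul_eq_mul, mul_one]

lemma adE_X : adE Xop = Pop := by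
  apply Finsupp.lhom_ext
  intro l c
  rw [single_eq]
  rcases l with _ | m
  · simp only [adE, LinearMap.smul_apply, LinearMap.sub_apply, LinearMap.comp_apply,
      map_smul, map_sub, Xs, Es, Ps, map_add]
    push_cast
    match_scalars <;> (try ring_nf; try simp [Complex.I_sq]; try ring)
  · simp only [adE, LinearMap.smul_apply, LinearMap.sub_apply, LinearMap.comp_apply,
      map_smul, map_sub, Xs, Es, Ps, map_add]
    push_cast [Nat.add_sub_cancel]
    match_scalars <;> (try ring_nf; try simp [Complex.I_sq]; try ring)

lemma adE_P : adE Pop = (4:ℂ) • Xop - (2:ℂ) • LinearMap.id := by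
  apply Finsupp.lhom_ext
  intro l c
  rw [single_eq]
  rcases l with _ | m
  · simp only [adE, LinearMap.smul_apply, LinearMap.sub_apply, LinearMap.comp_apply,
      LinearMap.id_apply, map_smul, map_sub, Xs, Es, Ps, map_add]
    push_cast
    match_scalars <;> (try ring_nf; try simp [Complex.I_sq]; try ring)
  · simp only [adE, LinearMap.smul_apply, LinearMap.sub_apply, LinearMap.comp_apply,
      LinearMap.id_apply, map_smul, map_sub, Xs, Es, Ps, map_add, Nat.add_sub_cancel,
      Nat.succ_sub_one]
    push_cast
    match_scalars <;> (try ring_nf; try simp [Complex.I_sq]; try ring)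

lemma adE_smul (a : ℂ) (A : (ℕ →₀ ℂ) →ₗ[ℂ] (ℕ →₀ ℂ)) : adE (a • A) = a • adE A := by
  simp only [adE]
  ext v
  simp
  ring

lemma adE_sub (A B : (ℕ →₀ ℂ) →ₗ[ℂ] (ℕ →₀ ℂ)) : adE (A - B) = adE A - adE B := by
  simp only [adE]
  ext v
  simp
  ring

lemma adE_id : adE LinearMap.id = 0 := by
  simp only [adE]
  ext v
  simp

/-- The iterated commutators of `X` with `iE` close in the span of `{X, P, id}`:
`ad^(2k-1)(X) = 4^(k-1) P` and `ad^(2k)(X) = 4^(k-1) (4X - 2 id)` for all `k ≥ 1`. -/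
theorem iterated_commutators_closed (k : ℕ) (hk : 1 ≤ k) :
    adE^[2 * k - 1] Xop = (4 : ℂ) ^ (k - 1) • Pop ∧
    adE^[2 * k] Xop =
      (4 : ℂ) ^ (k - 1) • ((4 : ℂ) • Xop - (2 : ℂ) • LinearMap.id) := by
  induction k with
  | zero => omega
  | succ n ih =>
    rcases Nat.eq_or_lt_of_le hk with h | h
    · have h1 : n = 0 := by omega
      subst h1
      refine ⟨by simpa using adE_X, ?_⟩
      have : adE^[2] Xop = adE (adE Xop) := by
        rw [Function.iterate_succ_apply', Function.iterate_one]
      simpa [this, adE_X] using adE_P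
    · have hn : 1 ≤ n := by omega
      obtain ⟨ih1, ih2⟩ := ih hn
      have e1 : 2 * (n + 1) - 1 = (2 * n) + 1 := by omega
      have e2 : 2 * (n + 1) = (2 * n + 1) + 1 := by omega
      have step1 : adE^[2 * (n + 1) - 1] Xop = (4 : ℂ) ^ n • Pop := by
        rw [e1, Function.iterate_succ_apply', ih2, adE_smul, adE_sub, adE_smul, adE_smul,
          adE_X, adE_id]
        have : (4:ℂ) ^ n = (4:ℂ)^(n-1) * 4 := by
          rw [← pow_succ]
          congr 1
          omega
        rw [this]
        ext v
        simp [smul_smul, mul_comm]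
      refine ⟨step1, ?_⟩
      rw [show 2 * (n+1) = (2 * (n+1) - 1) + 1 by omega, Function.iterate_succ_apply',
        step1, adE_smul, adE_P]
      simp
end

section
/- For every integer M ≥ 1, the vector y* = (y₁, y₂, y₃) with y₁ = −2(1+M)/M³, y₂ = 1/M⁴, y₃ = (1+M)²/M² − 1 is a feasible solution of the dual linear program: for every integer j ≥ 1 one has j·y₁ + j²·y₂ + y₃ + χ(j > M) ≥ 0, where χ(j > M) equals 1 if j > M and 0 otherwise. -/
/-- Dual feasibility: for every integer `M ≥ 1`, the dual vector
`y₁ = -2(1+M)/M³`, `y₂ = 1/M⁴`, `y₃ = (1+M)²/M² - 1` satisfies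
`j y₁ + j² y₂ + y₃ + χ(j > M) ≥ 0` for every integer `j ≥ 1`. -/
theorem dual_feasible (M : ℕ) (hM : 1 ≤ M) (j : ℕ) (hj : 1 ≤ j) :
    (j : ℝ) * (-2 * (1 + (M : ℝ)) / (M : ℝ) ^ 3)
      + (j : ℝ) ^ 2 * (1 / (M : ℝ) ^ 4)
      + ((1 + (M : ℝ)) ^ 2 / (M : ℝ) ^ 2 - 1)
      + (if M < j then (1 : ℝ) else 0) ≥ 0 := by
  have hm : (1 : ℝ) ≤ (M : ℝ) := by exact_mod_cast hM
  have hm0 : (0 : ℝ) < (M : ℝ) := by linarith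
  have hj1 : (1 : ℝ) ≤ (j : ℝ) := by exact_mod_cast hj
  have key : ∀ c : ℝ, (j : ℝ) * (-2 * (1 + (M : ℝ)) / (M : ℝ) ^ 3)
      + (j : ℝ) ^ 2 * (1 / (M : ℝ) ^ 4)
      + ((1 + (M : ℝ)) ^ 2 / (M : ℝ) ^ 2 - 1) + c
      = ((j : ℝ) - (M : ℝ) * (1 + (M : ℝ))) ^ 2 / (M : ℝ) ^ 4 - 1 + c := by
    intro c
    field_simp
    ring
  by_cases h : M < j
  · simp only [h, if_pos]
    rw [key]
    have hjm : (M : ℝ) + 1 ≤ (j : ℝ) := by exact_mod_cast h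
    have := sq_nonneg ((j : ℝ) - (M : ℝ) * (1 + (M : ℝ)))
    have h4 : (0 : ℝ) < (M : ℝ) ^ 4 := by positivity
    nlinarith [div_nonneg this h4.le]
  · simp only [h, if_neg, not_false_iff]
    rw [key]
    have hjm : (j : ℝ) ≤ (M : ℝ) := by exact_mod_cast Nat.le_of_not_lt h
    have h4 : (0 : ℝ) < (M : ℝ) ^ 4 := by positivity
    have hsq : (M:ℝ)^4 ≤ ((j : ℝ) - (M : ℝ) * (1 + (M : ℝ))) ^ 2 := by
      nlinarith [mul_nonneg (by linarith : (0:ℝ) ≤ (M:ℝ) - j)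
        (by nlinarith : (0:ℝ) ≤ (M:ℝ) + 2*(M:ℝ)^2 - j)]
    have := (one_le_div h4).mpr hsq
    linarith
end

section
/- Let M ≥ 1 be an integer and let (q_j)_{j≥1} be nonnegative reals with Σ_{j=1}^∞ q_j = 1 such that the series Σ_{j=1}^∞ j·q_j and Σ_{j=1}^∞ j²·q_j converge, with sums a and b respectively. Then the tail probability satisfies Σ_{j=M+1}^∞ q_j ≥ 2a(1+M)/M³ − b/M⁴ − (1+M)²/M² + 1. -/
/-- Weak-duality lower bound on the tail of a probability distribution on the positive
integers with prescribed first moment `a` and second moment `b`: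
`Σ_{j=M+1}^∞ q_j ≥ 2a(1+M)/M³ - b/M⁴ - (1+M)²/M² + 1`. Here `q (j)` for `j ≥ 1`
are the probabilities, encoded as a function on `ℕ` evaluated at `j + 1`. -/
theorem tail_lower_bound (M : ℕ) (hM : 1 ≤ M) (q : ℕ → ℝ) (a b : ℝ)
    (hq : ∀ j : ℕ, 1 ≤ j → 0 ≤ q j)
    (hnorm : HasSum (fun j : ℕ => q (j + 1)) 1)
    (hfirst : HasSum (fun j : ℕ => ((j : ℝ) + 1) * q (j + 1)) a)
    (hsecond : HasSum (fun j : ℕ => ((j : ℝ) + 1) ^ 2 * q (j + 1)) b) :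
    (∑' j : ℕ, q (M + 1 + j)) ≥
      2 * a * (1 + (M : ℝ)) / (M : ℝ) ^ 3 - b / (M : ℝ) ^ 4
        - (1 + (M : ℝ)) ^ 2 / (M : ℝ) ^ 2 + 1 := by
  have hMr : (1:ℝ) ≤ (M:ℝ) := by exact_mod_cast hM
  have hM0 : (0:ℝ) < (M:ℝ) := by linarith
  have hM4 : (0:ℝ) < (M:ℝ)^4 := by positivity
  set c1 : ℝ := 2 * (1 + (M:ℝ)) / (M:ℝ)^3 with hc1
  set c2 : ℝ := 1 / (M:ℝ)^4 with hc2
  set c3 : ℝ := 1 - (1 + (M:ℝ))^2 / (M:ℝ)^2 with hc3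
  -- key algebraic identity for the dual quadratic
  have hkey : ∀ x : ℝ, c1 * x - c2 * x^2 + c3
      = 1 - (x - (M:ℝ) - (M:ℝ)^2)^2 / (M:ℝ)^4 := by
    intro x
    rw [hc1, hc2, hc3]
    field_simp
    ring
  have hcoef_le_one : ∀ x : ℝ, c1 * x - c2 * x^2 + c3 ≤ 1 := by
    intro x
    rw [hkey]
    have : 0 ≤ (x - (M:ℝ) - (M:ℝ)^2)^2 / (M:ℝ)^4 := by positivity
    linarith
  have hcoef_nonpos : ∀ x : ℝ, x ≤ (M:ℝ) → c1 * x - c2 * x^2 + c3 ≤ 0 := by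
    intro x hx
    rw [hkey]
    have h1 : (M:ℝ)^4 ≤ (x - (M:ℝ) - (M:ℝ)^2)^2 := by nlinarith
    have h2 : (1:ℝ) ≤ (x - (M:ℝ) - (M:ℝ)^2)^2 / (M:ℝ)^4 := (one_le_div hM4).mpr h1
    linarith
  set G : ℕ → ℝ := fun i => (c1 * ((i:ℝ)+1) - c2 * ((i:ℝ)+1)^2 + c3) * q (i+1) with hG
  have hGsum : HasSum G (c1 * a - c2 * b + c3 * 1) := by
    have h := ((hfirst.mul_left c1).sub (hsecond.mul_left c2)).add (hnorm.mul_left c3)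
    have hfun : G = fun i : ℕ =>
        c1 * (((i:ℝ)+1) * q (i+1)) - c2 * (((i:ℝ)+1)^2 * q (i+1)) + c3 * q (i+1) := by
      funext i; rw [hG]; ring
    rw [hfun]; exact h
  -- tail sum as a shifted tsum
  have htc : (∑' j : ℕ, q (M + 1 + j)) = ∑' j : ℕ, q ((j + M) + 1) :=
    tsum_congr fun j => by congr 1; omega
  -- split G's sum
  have hsplit : (∑ i ∈ Finset.range M, G i) + ∑' i : ℕ, G (i + M)
      = c1 * a - c2 * b + c3 * 1 := by
    rw [Summable.sum_add_tsum_nat_add M hGsum.summable, hGsum.tsum_eq]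
  have hhead : (∑ i ∈ Finset.range M, G i) ≤ 0 := by
    apply Finset.sum_nonpos
    intro i hi
    have hiM : i < M := Finset.mem_range.mp hi
    have hx : ((i:ℝ)+1) ≤ (M:ℝ) := by
      have : (i:ℕ) + 1 ≤ M := hiM
      exact_mod_cast this
    exact mul_nonpos_of_nonpos_of_nonneg (hcoef_nonpos _ hx) (hq _ (Nat.le_add_left 1 i))
  have htail_le : (∑' i : ℕ, G (i + M)) ≤ ∑' j : ℕ, q ((j + M) + 1) := by
    apply Summable.tsum_le_tsum
    · intro i
      rw [hG]
      exact mul_le_of_le_one_left (hq _ (Nat.le_add_left 1 _)) (hcoef_le_one _)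
    · exact (summable_nat_add_iff M).mpr hGsum.summable
    · exact (summable_nat_add_iff M).mpr hnorm.summable
  have hfinal : c1 * a - c2 * b + c3 * 1 ≤ ∑' j : ℕ, q (M + 1 + j) := by
    rw [htc, ← hsplit]
    linarith
  have : 2 * a * (1 + (M : ℝ)) / (M : ℝ) ^ 3 - b / (M : ℝ) ^ 4
        - (1 + (M : ℝ)) ^ 2 / (M : ℝ) ^ 2 + 1 = c1 * a - c2 * b + c3 * 1 := by
    rw [hc1, hc2, hc3]; ring
  rw [ge_iff_le, this]
  exact hfinal
end

section
/- Define a(t) = (1 + cosh(2t))/2, b(t) = cosh²(t)·cosh(2t), and g(M) = 2·a(log M)·(1+M)/M³ − b(log M)/M⁴ − (1+M)²/M² + 1 for real M > 0. Then g(M) > 1/5 for every real M ≥ 9. -/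
/-- The weak-duality bound function
`g(M) = 2 a(log M)(1+M)/M³ - b(log M)/M⁴ - (1+M)²/M² + 1`, with
`a(t) = (1 + cosh (2 * t)) / 2` and `b(t) = cosh²(t) cosh(2t)`, satisfies `g(M) > 1/5`
for every real `M ≥ 9`. -/
theorem g_gt_one_fifth
    (a b : ℝ → ℝ) (ha : ∀ t, a t = (1 + Real.cosh (2 * t)) / 2)
    (hb : ∀ t, b t = Real.cosh t ^ 2 * Real.cosh (2 * t))
    (g : ℝ → ℝ)
    (hg : ∀ M : ℝ, 0 < M → g M = 2 * a (Real.log M) * (1 + M) / M ^ 3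
      - b (Real.log M) / M ^ 4 - (1 + M) ^ 2 / M ^ 2 + 1)
    (M : ℝ) (hM : 9 ≤ M) :
    g M > 1 / 5 := by
  have hM0 : (0:ℝ) < M := by linarith
  have hM20 : (0:ℝ) < M ^ 2 := by positivity
  have h1 : Real.cosh (Real.log M) = (M + M⁻¹) / 2 := Real.cosh_log hM0
  have h2 : Real.cosh (2 * Real.log M) = (M ^ 2 + (M ^ 2)⁻¹) / 2 := by
    rw [show 2 * Real.log M = Real.log (M ^ 2) by rw [Real.log_pow]; push_cast; ring]
    exact Real.cosh_log hM20
  rw [hg M hM0, ha, hb, h1, h2]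
  have hMne : M ≠ 0 := ne_of_gt hM0
  have key : (2 * ((1 + (M ^ 2 + (M ^ 2)⁻¹) / 2) / 2) * (1 + M) / M ^ 3 -
      ((M + M⁻¹) / 2) ^ 2 * ((M ^ 2 + (M ^ 2)⁻¹) / 2) / M ^ 4 - (1 + M) ^ 2 / M ^ 2 + 1)
      - 1 / 5 = (7*M^8 - 60*M^7 - 10*M^6 + 40*M^5 + 10*M^4 + 20*M^3 - 10*M^2 - 5)
        / (40 * M ^ 8) := by
    field_simp
    ring
  have hQ : 0 < 7*M^8 - 60*M^7 - 10*M^6 + 40*M^5 + 10*M^4 + 20*M^3 - 10*M^2 - 5 := by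
    nlinarith [pow_pos hM0 8, pow_pos hM0 7, pow_pos hM0 6, pow_pos hM0 5,
      pow_pos hM0 4, pow_pos hM0 3, sq_nonneg M,
      mul_le_mul_of_nonneg_left hM (le_of_lt (pow_pos hM0 7)),
      mul_le_mul_of_nonneg_left hM (le_of_lt (pow_pos hM0 5)),
      mul_le_mul_of_nonneg_left hM (le_of_lt (pow_pos hM0 2)),
      mul_le_mul_of_nonneg_left hM (le_of_lt (pow_pos hM0 1))]
  linarith [key, div_pos hQ (by positivity : (0:ℝ) < 40 * M ^ 8)]
end

section
/- Let M ≥ 9 be an integer and let (q_j)_{j≥1} be nonnegative reals with Σ_{j=1}^∞ q_j = 1, Σ_{j=1}^∞ j·q_j = (1 + cosh(2·log M))/2 and Σ_{j=1}^∞ j²·q_j = cosh²(log M)·cosh(2·log M) (both series convergent). Then Σ_{j=M+1}^∞ q_j > 1/5. In words: any probability distribution on the positive integers whose first and second moments equal the moments of the position of the single excitation at time t* = log M must place probability exceeding 1/5 beyond site M, so after a time only logarithmic in the distance a signal of constant strength has reached the distant region. -/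
/-- Constant-strength signal after logarithmic time: any probability distribution
`(q_j)_{j ≥ 1}` on the positive integers whose first and second moments equal the
moments `a(log M) = (1 + cosh(2 log M))/2` and `b(log M) = cosh²(log M) cosh(2 log M)`
of the position of the single excitation at time `t* = log M` must place probability
exceeding `1/5` beyond site `M`, for every integer `M ≥ 9`. -/
theorem constant_signal_after_log_time (M : ℕ) (hM : 9 ≤ M) (q : ℕ → ℝ)
    (hq : ∀ j : ℕ, 1 ≤ j → 0 ≤ q j)
    (hnorm : HasSum (fun j : ℕ => q (j + 1)) 1)
    (hfirst : HasSum (fun j : ℕ => ((j : ℝ) + 1) * q (j + 1))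
      ((1 + Real.cosh (2 * Real.log M)) / 2))
    (hsecond : HasSum (fun j : ℕ => ((j : ℝ) + 1) ^ 2 * q (j + 1))
      (Real.cosh (Real.log M) ^ 2 * Real.cosh (2 * Real.log M))) :
    (∑' j : ℕ, q (M + 1 + j)) > 1 / 5 := by
  set m : ℝ := (M : ℝ) with hmdef
  have hm9 : (9 : ℝ) ≤ m := by rw [hmdef]; exact_mod_cast hM
  have hm0 : (0 : ℝ) < m := by linarith
  set u : ℝ := m⁻¹ with hudef
  have hmu : m * u = 1 := mul_inv_cancel₀ (ne_of_gt hm0)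
  have hu0 : 0 < u := inv_pos.mpr hm0
  have hu1 : u ≤ 1 := by
    rw [hudef, inv_le_one_iff₀]; right; linarith
  -- explicit values of the cosh's
  have hch : Real.cosh (Real.log m) = (m + u) / 2 := by
    rw [Real.cosh_eq, Real.exp_log hm0, Real.exp_neg, Real.exp_log hm0]
  have hch2 : Real.cosh (2 * Real.log m) = (m ^ 2 + u ^ 2) / 2 := by
    have h2l : (2 : ℝ) * Real.log m = Real.log (m ^ 2) := by
      rw [Real.log_pow]; push_cast; ring
    rw [h2l, Real.cosh_eq, Real.exp_log (by positivity), Real.exp_neg,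
      Real.exp_log (by positivity)]
    rw [hudef, sq, sq, mul_inv]
  rw [hch2] at hfirst
  rw [hch, hch2] at hsecond
  set A : ℝ := (1 + (m ^ 2 + u ^ 2) / 2) / 2 with hAdef
  set B : ℝ := ((m + u) / 2) ^ 2 * ((m ^ 2 + u ^ 2) / 2) with hBdef
  set v : ℝ := 7 * m ^ 2 / 10 with hvdef
  set D : ℝ := (v - m) ^ 2 with hDdef
  have hvm : m < v := by
    rw [hvdef]; nlinarith
  have hD0 : 0 < D := by
    rw [hDdef]; exact pow_pos (sub_pos.mpr hvm) 2
  -- the quadratic-combination sum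
  have hS : HasSum (fun j : ℕ => (((j : ℝ) + 1) - v) ^ 2 * q (j + 1))
      (B + (-(2 * v) * A + v ^ 2 * 1)) := by
    have h := hsecond.add ((hfirst.mul_left (-(2 * v))).add (hnorm.mul_left (v ^ 2)))
    convert h using 1
    funext j; ring
  -- the minorant sum
  set F : ℕ → ℝ := fun j => q (j + 1) - (((j : ℝ) + 1) - v) ^ 2 * q (j + 1) / D
    with hFdef
  have hF : HasSum F (1 - (B + (-(2 * v) * A + v ^ 2 * 1)) / D) :=
    hnorm.sub (hS.div_const D)
  -- the indicator-truncated tail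
  set G : ℕ → ℝ := fun j => if M ≤ j then q (j + 1) else 0 with hGdef
  have hqn : ∀ j : ℕ, 0 ≤ q (j + 1) := fun j => hq (j + 1) (by omega)
  have hGsummable : Summable G := by
    refine Summable.of_nonneg_of_le ?_ ?_ hnorm.summable
    · intro j; rw [hGdef]; dsimp only; split
      · exact hqn j
      · exact le_refl 0
    · intro j; rw [hGdef]; dsimp only; split
      · exact le_refl _
      · exact hqn j
  -- pointwise F ≤ G
  have hFG : ∀ j : ℕ, F j ≤ G j := by
    intro j
    rw [hFdef, hGdef]; dsimp only
    by_cases h : M ≤ j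
    · rw [if_pos h]
      have : 0 ≤ (((j : ℝ) + 1) - v) ^ 2 * q (j + 1) / D :=
        div_nonneg (mul_nonneg (sq_nonneg _) (hqn j)) hD0.le
      linarith
    · rw [if_neg h]
      push_neg at h
      have hjm : (j : ℝ) + 1 ≤ m := by
        rw [hmdef]; exact_mod_cast Nat.succ_le_of_lt h
      have hsq : D ≤ (((j : ℝ) + 1) - v) ^ 2 := by
        rw [hDdef]; nlinarith
      have h1 : (1 : ℝ) ≤ (((j : ℝ) + 1) - v) ^ 2 / D := (one_le_div hD0).mpr hsq
      have h2 : q (j + 1) * 1 ≤ q (j + 1) * ((((j : ℝ) + 1) - v) ^ 2 / D) :=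
        mul_le_mul_of_nonneg_left h1 (hqn j)
      have h3 : q (j + 1) * ((((j : ℝ) + 1) - v) ^ 2 / D)
          = (((j : ℝ) + 1) - v) ^ 2 * q (j + 1) / D := by ring
      linarith [h2, h3 ▸ h2]
  -- the tail is summable
  have hT : Summable (fun j : ℕ => q (M + 1 + j)) := by
    have h := hnorm.summable.comp_injective (add_right_injective M)
    convert h using 2 with j
    show q (M + 1 + j) = q (M + j + 1)
    congr 1
    omega
    rfl
  -- G sums to the tail
  have hinj : Function.Injective (fun k : ℕ => M + k) := fun a b h => by
    simpa using h
  have hzero : ∀ a ∉ Set.range (fun k : ℕ => M + k), G a = 0 := by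
    intro a ha
    have haM : a < M := by
      by_contra hc
      refine ha ⟨a - M, ?_⟩
      show M + (a - M) = a
      omega
    rw [hGdef]; dsimp only; rw [if_neg (by omega)]
  have hGT : HasSum G (∑' j : ℕ, q (M + 1 + j)) := by
    rw [← hinj.hasSum_iff hzero]
    have h := hT.hasSum
    convert h using 1
    funext k
    simp only [Function.comp, hGdef]
    rw [if_pos (by omega)]
    congr 1
    omega
  -- chain the inequalities
  have hle : 1 - (B + (-(2 * v) * A + v ^ 2 * 1)) / D ≤ ∑' j : ℕ, q (M + 1 + j) := by
    rw [← hF.tsum_eq, ← hGT.tsum_eq]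
    exact Summable.tsum_le_tsum hFG hF.summable hGsummable
  -- the algebraic inequality
  have key : 5 * (B + (-(2 * v) * A + v ^ 2 * 1)) < 4 * D := by
    have hexp : 4 * D - 5 * (B + (-(2 * v) * A + v ^ 2 * 1))
        = (127/200) * m ^ 4 - (28/5) * m ^ 3 + (25/4) * m ^ 2 + 1/2
          - (5/4) * u ^ 2 - (5/8) * u ^ 4 := by
      rw [hBdef, hAdef, hvdef, hDdef]
      linear_combination (1/2 - (5/4) * u ^ 2 + (1/2) * (m * u) - (5/4) * m ^ 2) * hmu
    have hu2 : u ^ 2 ≤ 1 := pow_le_one₀ hu0.le hu1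
    have hu4 : u ^ 4 ≤ 1 := pow_le_one₀ hu0.le hu1
    have hm2 : (81 : ℝ) ≤ m ^ 2 := by
      calc (81 : ℝ) = 9 * 9 := by norm_num
        _ ≤ m * m := mul_le_mul hm9 hm9 (by norm_num) (by linarith)
        _ = m ^ 2 := by ring
    have hm3 : (729 : ℝ) ≤ m ^ 3 := by
      calc (729 : ℝ) = 81 * 9 := by norm_num
        _ ≤ m ^ 2 * m := mul_le_mul hm2 hm9 (by norm_num) (by positivity)
        _ = m ^ 3 := by ring
    have ha : (729 : ℝ) * 23 ≤ m ^ 3 * (127 * m - 1120) :=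
      mul_le_mul hm3 (by linarith) (by linarith) (by positivity)
    linarith [hexp, ha, hu2, hu4, sq_nonneg m]
  have hfrac : (B + (-(2 * v) * A + v ^ 2 * 1)) / D < 4 / 5 := by
    rw [div_lt_div_iff₀ hD0 (by norm_num : (0:ℝ) < 5)]
    linarith
  linarith
end
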